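/- For the vertical lines ℓ_n = a_n + i F_{>0} in the Puiseux upper half-plane: if b ∈ F_{>0} with log(b) < t_{n+1}, then d(a_n + ib, a_{n+1} + ib') > 0 for every b' ∈ F_{>0}. -/

import Mathlib

/-!
We model the field `F` of real Puiseux series inside the field of Hahn series
`HahnSeries ℚ ℝ`, via the exponent-reversing identification `X^t ↦ single (-t) 1`
(so that the paper's `X` is infinitely large and the leading-exponent logarithm
is `f ↦ -f.order`).  A Hahn series is a (real) Puiseux series iff its support
has bounded denominator.
-/

noncomputable section

/-- The ambient Hahn series field. -/
abbrev Fh := HahnSeries ℚ ℝ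

/-- The leading-exponent logarithm `log : F_{≠0} → ℚ` (junk value `0` at `0`). -/
def llog (f : Fh) : ℚ := -f.order

/-- The monomial `X^t` of the paper. -/
def Xp (t : ℚ) : Fh := HahnSeries.single (-t) 1

/-- `f` is a real Puiseux series: the denominators of its support are bounded. -/
def IsPuiseux (f : Fh) : Prop :=
  ∃ m : ℕ, 0 < m ∧ ∀ q ∈ f.support, ∃ k : ℤ, q = (k : ℚ) / m

/-- `f > 0` in the ordered field `F`: the leading coefficient is positive. -/
def FPos (f : Fh) : Prop := f ≠ 0 ∧ 0 < f.coeff f.order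

/-- `t n := -1 + 1/2^n`. -/
def tseq (n : ℕ) : ℚ := -1 + 1 / 2 ^ n

/-- `a n := ∑_{k=1}^n X^{t_k}`. -/
def aseq (n : ℕ) : Fh := ∑ k ∈ Finset.Icc 1 n, Xp (tseq k)

/-- `b n := X^{t_n}`. -/
def bseq (n : ℕ) : Fh := Xp (tseq n)

/-- Brumfiel's pseudo-distance on the upper half plane `H_F`:
`d(x+iy, x'+iy') = log (((x-x')² + y² + y'²)/(y y'))`. -/
def dH (x y x' y' : Fh) : ℚ := llog (((x - x') ^ 2 + y ^ 2 + y' ^ 2) / (y * y'))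

open HahnSeries

lemma fpos_add {f g : Fh} (hf : FPos f) (hg : FPos g) :
    FPos (f + g) ∧ (f + g).order = min f.order g.order := by
  obtain ⟨hf0, hfc⟩ := hf
  obtain ⟨hg0, hgc⟩ := hg
  rcases lt_trichotomy f.order g.order with h | h | h
  · have hot : f.orderTop < g.orderTop := by
      rw [← order_eq_orderTop_of_ne_zero hf0, ← order_eq_orderTop_of_ne_zero hg0]
      exact_mod_cast h
    have hlc : (f + g).leadingCoeff = f.leadingCoeff := leadingCoeff_add_eq_left hot
    have hne : f + g ≠ 0 := by
      rw [← leadingCoeff_ne_zero, hlc, leadingCoeff_ne_zero]; exact hf0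
    have hord : (f + g).order = f.order := by
      have := orderTop_add_eq_left hot
      rw [← order_eq_orderTop_of_ne_zero hne, ← order_eq_orderTop_of_ne_zero hf0] at this
      exact_mod_cast this
    refine ⟨⟨hne, ?_⟩, by rw [hord, min_eq_left h.le]⟩
    rw [← leadingCoeff_eq, hlc, leadingCoeff_eq]; exact hfc
  · have hc : (f + g).coeff f.order = f.coeff f.order + g.coeff g.order := by
      rw [coeff_add]; congr 1; rw [h]
    have hpos : 0 < (f + g).coeff f.order := by rw [hc]; positivity
    have hne : f + g ≠ 0 := ne_zero_of_coeff_ne_zero hpos.ne'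
    have h1 : (f + g).order ≤ f.order := order_le_of_coeff_ne_zero hpos.ne'
    have h2 : min f.order g.order ≤ (f + g).order := min_order_le_order_add hne
    have hord : (f + g).order = f.order := le_antisymm h1 (by simpa [h] using h2)
    exact ⟨⟨hne, hord ▸ hpos⟩, by rw [hord, h, min_self]⟩
  · have hot : g.orderTop < f.orderTop := by
      rw [← order_eq_orderTop_of_ne_zero hf0, ← order_eq_orderTop_of_ne_zero hg0]
      exact_mod_cast h
    have hlc : (f + g).leadingCoeff = g.leadingCoeff := leadingCoeff_add_eq_right hot
    have hne : f + g ≠ 0 := by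
      rw [← leadingCoeff_ne_zero, hlc, leadingCoeff_ne_zero]; exact hg0
    have hord : (f + g).order = g.order := by
      have := orderTop_add_eq_right hot
      rw [← order_eq_orderTop_of_ne_zero hne, ← order_eq_orderTop_of_ne_zero hg0] at this
      exact_mod_cast this
    refine ⟨⟨hne, ?_⟩, by rw [hord, min_eq_right h.le]⟩
    rw [← leadingCoeff_eq, hlc, leadingCoeff_eq]; exact hgc

lemma fpos_mul {f g : Fh} (hf : FPos f) (hg : FPos g) :
    FPos (f * g) ∧ (f * g).order = f.order + g.order := by
  obtain ⟨hf0, hfc⟩ := hf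
  obtain ⟨hg0, hgc⟩ := hg
  have hord : (f * g).order = f.order + g.order := order_mul hf0 hg0
  have hc : (f * g).coeff (f.order + g.order) = f.leadingCoeff * g.leadingCoeff :=
    coeff_mul_order_add_order f g
  rw [leadingCoeff_eq, leadingCoeff_eq] at hc
  have hpos : 0 < (f * g).coeff (f * g).order := by
    rw [hord, hc]; positivity
  exact ⟨⟨ne_zero_of_coeff_ne_zero hpos.ne', hpos⟩, hord⟩

lemma order_inv' {g : Fh} (hg : g ≠ 0) : g⁻¹.order = -g.order := by
  have h1 : g * g⁻¹ = 1 := mul_inv_cancel₀ hg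
  have h2 := order_mul hg (inv_ne_zero hg)
  rw [h1, order_one] at h2
  linarith

lemma fpos_Xp (t : ℚ) : FPos (Xp t) ∧ (Xp t).order = -t := by
  have h0 : (Xp t) ≠ 0 := single_ne_zero one_ne_zero
  have ho : (Xp t).order = -t := order_single one_ne_zero
  refine ⟨⟨h0, ?_⟩, ho⟩
  rw [ho]
  simp [Xp]

lemma fpos_sq {f : Fh} (hf : FPos f) : FPos (f ^ 2) ∧ (f ^ 2).order = 2 * f.order := by
  have := fpos_mul hf hf
  rw [← sq] at this
  exact ⟨this.1, by rw [this.2]; ring⟩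

/-- If `b > 0` with `log b < t_{n+1}`, then `d(a_n + ib, a_{n+1} + ib') > 0` for
every `b' > 0`. -/
theorem dist_pos_of_log_lt :
    ∀ (n : ℕ) (b b' : Fh), FPos b → FPos b' → llog b < tseq (n + 1) →
      0 < dH (aseq n) b (aseq (n + 1)) b' := by
  intro n b b' hb hb' hlog
  set t := tseq (n + 1) with ht
  -- the difference of the lines
  have hstep : aseq (n + 1) = aseq n + Xp t := by
    rw [aseq, aseq, ← Finset.sum_Icc_succ_top (by omega : 1 ≤ n + 1)]
  have hdiff : aseq n - aseq (n + 1) = -Xp t := by rw [hstep]; ring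
  have hsq : (aseq n - aseq (n + 1)) ^ 2 = (Xp t) ^ 2 := by rw [hdiff]; ring
  obtain ⟨hX, hXo⟩ := fpos_Xp t
  obtain ⟨hX2, hX2o⟩ := fpos_sq hX
  obtain ⟨hb2, hb2o⟩ := fpos_sq hb
  obtain ⟨hb'2, hb'2o⟩ := fpos_sq hb'
  obtain ⟨hN1, hN1o⟩ := fpos_add hX2 hb2
  obtain ⟨hN, hNo⟩ := fpos_add hN1 hb'2
  obtain ⟨hD, hDo⟩ := fpos_mul hb hb'
  -- unfold dH
  rw [dH, hsq]
  set N : Fh := (Xp t) ^ 2 + b ^ 2 + b' ^ 2 with hNdef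
  have hNne : N ≠ 0 := hN.1
  have hDne : b * b' ≠ 0 := hD.1
  have hdiv : (N / (b * b')).order = N.order - (b * b').order := by
    rw [div_eq_mul_inv, order_mul hNne (inv_ne_zero hDne), order_inv' hDne]
    ring
  rw [llog, hdiv, hNo, hN1o, hX2o, hXo, hDo]
  have hob : -t < b.order := by
    rw [llog] at hlog; linarith
  rcases le_or_gt (-t) b'.order with h | h
  · have : 2 * (-t) < b.order + b'.order := by linarith
    have hmin : min (min (2 * (-t)) (b ^ 2).order) (b' ^ 2).order ≤ 2 * (-t) :=
      le_trans (min_le_left _ _) (min_le_left _ _)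
    rw [hb2o, hb'2o] at hmin ⊢
    have := le_trans (min_le_left (min (2 * (-t)) (2 * b.order)) (2 * b'.order))
      (min_le_left (2 * (-t)) (2 * b.order))
    linarith
  · have hmin : min (min (2 * (-t)) (2 * b.order)) (2 * b'.order) ≤ 2 * b'.order :=
      min_le_right _ _
    rw [hb2o, hb'2o]
    have : 2 * b'.order < b.order + b'.order := by linarith
    linarith
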